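/- arXiv:2507.07673 — 2 statements merged into one kernel-verified Lean document; each statement's English description precedes it below -/
import Mathlib

section
/- Let p₁, p₂ be distinct primes. For every prime p ∉ {3, p₁, p₂}, at least one element of the set {p₁, p₂, p₁p₂, p₁p₂²} is a cube modulo p. -/
lemma cube_lift (p : ℕ) [NeZero p] (b : ℤ) (y : ZMod p) (hy : y ^ 3 = (b : ZMod p)) :
    ∃ x : ℤ, (p : ℤ) ∣ x ^ 3 - b := by
  refine ⟨(y.val : ℤ), ?_⟩
  have := (ZMod.intCast_zmod_eq_zero_iff_dvd ((y.val : ℤ) ^ 3 - b) p).mp ?_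
  · exact this
  push_cast
  rw [ZMod.natCast_val, ZMod.cast_id, hy]
  ring

/-- For distinct primes `p₁, p₂` and any prime `p ∉ {3, p₁, p₂}`, the set
`{p₁, p₂, p₁p₂, p₁p₂²}` contains a cube modulo `p`. -/
theorem cube_set_example (p₁ p₂ : ℕ) (h₁ : p₁.Prime) (h₂ : p₂.Prime) (hne : p₁ ≠ p₂)
    (p : ℕ) (hp : p.Prime) (hp3 : p ≠ 3) (hpp₁ : p ≠ p₁) (hpp₂ : p ≠ p₂) :
    ∃ b ∈ ({(p₁ : ℤ), (p₂ : ℤ), (p₁ : ℤ) * p₂, (p₁ : ℤ) * (p₂ : ℤ) ^ 2} : Set ℤ),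
      ∃ x : ℤ, (p : ℤ) ∣ x ^ 3 - b := by
  haveI : Fact p.Prime := ⟨hp⟩
  have hu1 : IsUnit (p₁ : ZMod p) := by
    rw [isUnit_iff_ne_zero, Ne, ZMod.natCast_eq_zero_iff]
    intro h
    exact hpp₁ ((Nat.prime_dvd_prime_iff_eq hp h₁).mp h)
  have hu2 : IsUnit (p₂ : ZMod p) := by
    rw [isUnit_iff_ne_zero, Ne, ZMod.natCast_eq_zero_iff]
    intro h
    exact hpp₂ ((Nat.prime_dvd_prime_iff_eq hp h₂).mp h)
  obtain ⟨g, hg⟩ := IsCyclic.exists_generator (α := (ZMod p)ˣ)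
  obtain ⟨m, hm⟩ : hu1.unit ∈ Submonoid.powers g := by
    rw [mem_powers_iff_mem_zpowers]; exact hg _
  obtain ⟨n, hn⟩ : hu2.unit ∈ Submonoid.powers g := by
    rw [mem_powers_iff_mem_zpowers]; exact hg _
  have key : ∀ e : ℕ, 3 ∣ e → ∃ x : ZMod p, x ^ 3 = ((g ^ e : (ZMod p)ˣ) : ZMod p) := by
    intro e ⟨k, hk⟩
    exact ⟨((g ^ k : (ZMod p)ˣ) : ZMod p), by
      rw [← Units.val_pow_eq_pow_val, ← pow_mul, hk, mul_comm]⟩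
  have hm' : ((g ^ m : (ZMod p)ˣ) : ZMod p) = (p₁ : ZMod p) := by rw [show g ^ m = hu1.unit from hm]; exact hu1.unit_spec
  have hn' : ((g ^ n : (ZMod p)ˣ) : ZMod p) = (p₂ : ZMod p) := by rw [show g ^ n = hu2.unit from hn]; exact hu2.unit_spec
  rcases (by omega : m % 3 = 0 ∨ m % 3 = 1 ∨ m % 3 = 2) with h | h | h <;>
  rcases (by omega : n % 3 = 0 ∨ n % 3 = 1 ∨ n % 3 = 2) with h' | h' | h'
  case _ =>
    refine ⟨(p₁ : ℤ), by simp, ?_⟩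
    obtain ⟨x, hx⟩ := key m (by omega)
    exact cube_lift p _ x (by rw [hx, hm']; push_cast; ring)
  case _ =>
    refine ⟨(p₁ : ℤ), by simp, ?_⟩
    obtain ⟨x, hx⟩ := key m (by omega)
    exact cube_lift p _ x (by rw [hx, hm']; push_cast; ring)
  case _ =>
    refine ⟨(p₁ : ℤ), by simp, ?_⟩
    obtain ⟨x, hx⟩ := key m (by omega)
    exact cube_lift p _ x (by rw [hx, hm']; push_cast; ring)
  case _ =>
    refine ⟨(p₂ : ℤ), by simp, ?_⟩
    obtain ⟨x, hx⟩ := key n (by omega)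
    exact cube_lift p _ x (by rw [hx, hn']; push_cast; ring)
  case _ =>
    refine ⟨(p₁ : ℤ) * (p₂ : ℤ) ^ 2, by simp, ?_⟩
    obtain ⟨x, hx⟩ := key (m + 2 * n) (by omega)
    refine cube_lift p _ x ?_
    rw [hx, pow_add, Units.val_mul, hm', mul_comm 2 n, pow_mul,
      Units.val_pow_eq_pow_val, hn']
    push_cast; ring
  case _ =>
    refine ⟨(p₁ : ℤ) * p₂, by simp, ?_⟩
    obtain ⟨x, hx⟩ := key (m + n) (by omega)
    refine cube_lift p _ x ?_
    rw [hx, pow_add, Units.val_mul, hm', hn']; push_cast; ring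
  case _ =>
    refine ⟨(p₂ : ℤ), by simp, ?_⟩
    obtain ⟨x, hx⟩ := key n (by omega)
    exact cube_lift p _ x (by rw [hx, hn']; push_cast; ring)
  case _ =>
    refine ⟨(p₁ : ℤ) * p₂, by simp, ?_⟩
    obtain ⟨x, hx⟩ := key (m + n) (by omega)
    refine cube_lift p _ x ?_
    rw [hx, pow_add, Units.val_mul, hm', hn']; push_cast; ring
  case _ =>
    refine ⟨(p₁ : ℤ) * (p₂ : ℤ) ^ 2, by simp, ?_⟩
    obtain ⟨x, hx⟩ := key (m + 2 * n) (by omega)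
    refine cube_lift p _ x ?_
    rw [hx, pow_add, Units.val_mul, hm', mul_comm 2 n, pow_mul,
      Units.val_pow_eq_pow_val, hn']
    push_cast; ring
end

section
/- Let q be an odd prime and Q the set of nonzero squares of F_q. The point set S = {⟨(0,1,−s)⟩, ⟨(−s,0,1)⟩, ⟨(1,−s,0)⟩ : s ∈ Q} ∪ {⟨(1,0,0)⟩, ⟨(0,1,0)⟩, ⟨(0,0,1)⟩} is a blocking set of PG(F_q³): every line of PG(F_q³) (equivalently every hyperplane, given by an equation aX₁+bX₂+cX₃=0 with (a,b,c) ≠ 0) contains a point of S. -/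
lemma key_sq (q : ℕ) (hq : q.Prime) (hqodd : Odd q) (x y z : ZMod q)
    (hx : x ≠ 0) (hy : y ≠ 0) (hz : z ≠ 0) (h : x * y * z = 1) :
    IsSquare x ∨ IsSquare y ∨ IsSquare z := by
  haveI : Fact q.Prime := ⟨hq⟩
  by_contra hc
  push_neg at hc
  obtain ⟨h1, h2, h3⟩ := hc
  have e1 := quadraticChar_neg_one_iff_not_isSquare.mpr h1
  have e2 := quadraticChar_neg_one_iff_not_isSquare.mpr h2
  have e3 := quadraticChar_neg_one_iff_not_isSquare.mpr h3
  have := map_mul (quadraticChar (ZMod q)) (x * y) z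
  rw [map_mul (quadraticChar (ZMod q)) x y, e1, e2, e3, h] at this
  simp at this

/-- The projective-triangle point set is a blocking set of `PG(F_q³)`: every
hyperplane `aX₁ + bX₂ + cX₃ = 0` (with `(a,b,c) ≠ 0`) contains one of its points. -/
theorem projective_triangle_blocking (q : ℕ) (hq : q.Prime) (hqodd : Odd q)
    (a b c : ZMod q) (habc : ¬(a = 0 ∧ b = 0 ∧ c = 0)) :
    ∃ W ∈ {W : Submodule (ZMod q) (Fin 3 → ZMod q) |
      (∃ s : ZMod q, (∃ t : ZMod q, t ≠ 0 ∧ t ^ 2 = s) ∧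
        (W = Submodule.span (ZMod q) {![0, 1, -s]} ∨
         W = Submodule.span (ZMod q) {![-s, 0, 1]} ∨
         W = Submodule.span (ZMod q) {![1, -s, 0]})) ∨
      W = Submodule.span (ZMod q) {![1, 0, 0]} ∨
      W = Submodule.span (ZMod q) {![0, 1, 0]} ∨
      W = Submodule.span (ZMod q) {![0, 0, 1]}},
      ∀ v ∈ W, a * v 0 + b * v 1 + c * v 2 = 0 := by
  haveI : Fact q.Prime := ⟨hq⟩
  by_cases ha : a = 0
  · refine ⟨_, Or.inr (Or.inl rfl), fun v hv => ?_⟩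
    rw [Submodule.mem_span_singleton] at hv
    obtain ⟨k, rfl⟩ := hv
    simp [ha]
  by_cases hb : b = 0
  · refine ⟨_, Or.inr (Or.inr (Or.inl rfl)), fun v hv => ?_⟩
    rw [Submodule.mem_span_singleton] at hv
    obtain ⟨k, rfl⟩ := hv
    simp [hb]
  by_cases hc : c = 0
  · refine ⟨_, Or.inr (Or.inr (Or.inr rfl)), fun v hv => ?_⟩
    rw [Submodule.mem_span_singleton] at hv
    obtain ⟨k, rfl⟩ := hv
    simp [hc]
  have hprod : (b * c⁻¹) * (c * a⁻¹) * (a * b⁻¹) = 1 := by field_simp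
  have hx : b * c⁻¹ ≠ 0 := by simp [hb, hc]
  have hy : c * a⁻¹ ≠ 0 := by simp [hc, ha]
  have hz : a * b⁻¹ ≠ 0 := by simp [ha, hb]
  rcases key_sq q hq hqodd _ _ _ hx hy hz hprod with hs | hs | hs
  · obtain ⟨t, ht⟩ := hs
    have htne : t ≠ 0 := by rintro rfl; exact hx (by simpa using ht)
    refine ⟨_, Or.inl ⟨b * c⁻¹, ⟨t, htne, by rw [sq]; exact ht.symm⟩, Or.inl rfl⟩,
      fun v hv => ?_⟩
    rw [Submodule.mem_span_singleton] at hv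
    obtain ⟨k, rfl⟩ := hv
    simp only [Pi.smul_apply, Matrix.cons_val_zero, Matrix.cons_val_one, Matrix.head_cons,
      Matrix.cons_val_two, Matrix.tail_cons, smul_eq_mul]
    field_simp
    ring
  · obtain ⟨t, ht⟩ := hs
    have htne : t ≠ 0 := by rintro rfl; exact hy (by simpa using ht)
    refine ⟨_, Or.inl ⟨c * a⁻¹, ⟨t, htne, by rw [sq]; exact ht.symm⟩, Or.inr (Or.inl rfl)⟩,
      fun v hv => ?_⟩
    rw [Submodule.mem_span_singleton] at hv
    obtain ⟨k, rfl⟩ := hv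
    simp only [Pi.smul_apply, Matrix.cons_val_zero, Matrix.cons_val_one, Matrix.head_cons,
      Matrix.cons_val_two, Matrix.tail_cons, smul_eq_mul]
    field_simp
    ring
  · obtain ⟨t, ht⟩ := hs
    have htne : t ≠ 0 := by rintro rfl; exact hz (by simpa using ht)
    refine ⟨_, Or.inl ⟨a * b⁻¹, ⟨t, htne, by rw [sq]; exact ht.symm⟩, Or.inr (Or.inr rfl)⟩,
      fun v hv => ?_⟩
    rw [Submodule.mem_span_singleton] at hv
    obtain ⟨k, rfl⟩ := hv
    simp only [Pi.smul_apply, Matrix.cons_val_zero, Matrix.cons_val_one, Matrix.head_cons,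
      Matrix.cons_val_two, Matrix.tail_cons, smul_eq_mul]
    field_simp
    ring
end
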